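/- (PGA duality via the Euclidean split.) For all C, D in the Euclidean subalgebra G₃ of CGA generated by {ι(e₁), ι(e₂), ι(e₃)}, the projective dual of C + D ι(e₀) satisfies (C + D ι(e₀))^{*_P} = −D^{*_E} + C^{*_E} ι(e₀), where X^{*_E} := −X I_E is the Euclidean dual. -/

import Mathlib

open CliffordAlgebra

/-- The matrix of the CGA inner product on `V = ℝ⁵`; indices `0, 1, 2, 3, 4`
correspond to the basis `e₀, e₁, e₂, e₃, e∞`. -/
def Bmat : Matrix (Fin 5) (Fin 5) ℝ :=
  !![0, 0, 0, 0, -1;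
     0, 1, 0, 0, 0;
     0, 0, 1, 0, 0;
     0, 0, 0, 1, 0;
     -1, 0, 0, 0, 0]

/-- The CGA quadratic form
`Q(a e₀ + x₁e₁ + x₂e₂ + x₃e₃ + b e∞) = x₁² + x₂² + x₃² − 2ab`. -/
noncomputable def Q : QuadraticForm ℝ (Fin 5 → ℝ) := Bmat.toQuadraticMap'

/-- The basis vectors of `V = ℝ⁵`: `e 0 = e₀`, `e 1, e 2, e 3` Euclidean, `e 4 = e∞`. -/
def e (i : Fin 5) : Fin 5 → ℝ := Pi.single i 1

/-- The linear map `♯ : V → V` fixing `e₁, e₂, e₃` and sending `e₀ ↦ -e∞`, `e∞ ↦ -e₀`. -/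
def sharpV : (Fin 5 → ℝ) →ₗ[ℝ] (Fin 5 → ℝ) where
  toFun v i := if i = 0 then -(v 4) else if i = 4 then -(v 0) else v i
  map_add' u v := by
    funext i
    by_cases h : i = 0 <;> by_cases h' : i = 4 <;> simp [h, h'] <;> ring
  map_smul' c v := by
    funext i
    by_cases h : i = 0 <;> by_cases h' : i = 4 <;> simp [h, h'] <;> ring

/-- Outer (wedge) product of a multivector with a vector:
`A ∧ v := ½ (A ι(v) + ι(v) α(A))`, where `α` is the grade involution. -/
noncomputable def wedgeVec (A : CliffordAlgebra Q) (v : Fin 5 → ℝ) : CliffordAlgebra Q :=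
  (1 / 2 : ℝ) • (A * ι Q v + ι Q v * involute A)

/-- The conformal pseudoscalar `I_c = (((e₀ ∧ e₁) ∧ e₂) ∧ e₃) ∧ e∞`. -/
noncomputable def Ic : CliffordAlgebra Q :=
  wedgeVec (wedgeVec (wedgeVec (wedgeVec (ι Q (e 0)) (e 1)) (e 2)) (e 3)) (e 4)

/-- The subalgebra `CGA₀` of CGA generated by `ι(e₀), ι(e₁), ι(e₂), ι(e₃)`. -/
noncomputable def CGA₀ : Subalgebra ℝ (CliffordAlgebra Q) :=
  Algebra.adjoin ℝ {ι Q (e 0), ι Q (e 1), ι Q (e 2), ι Q (e 3)}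

/-- The Euclidean subalgebra `G₃` of CGA generated by `ι(e₁), ι(e₂), ι(e₃)`. -/
noncomputable def G₃ : Subalgebra ℝ (CliffordAlgebra Q) :=
  Algebra.adjoin ℝ {ι Q (e 1), ι Q (e 2), ι Q (e 3)}

/-- The Euclidean pseudoscalar `I_E = ι(e₁) ι(e₂) ι(e₃)`. -/
noncomputable def IE : CliffordAlgebra Q := ι Q (e 1) * ι Q (e 2) * ι Q (e 3)

/-- The Euclidean dual `X^{*_E} := X I_E⁻¹ = -X I_E`. -/
noncomputable def dualE (X : CliffordAlgebra Q) : CliffordAlgebra Q := -(X * IE)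

/-- The projective (PGA) dual `A^{*_P} := ♯((A ∧ e∞) I_c⁻¹)`, with `I_c⁻¹ = -I_c`,
expressed relative to a realization `F` of the involution `♯` on the Clifford algebra
(i.e. `F` is the algebra endomorphism induced by the isometry `♯ : V → V`,
characterized by `F (ι v) = ι (♯ v)`). -/
noncomputable def dualP (F : CliffordAlgebra Q →ₐ[ℝ] CliffordAlgebra Q)
    (A : CliffordAlgebra Q) : CliffordAlgebra Q :=
  F (wedgeVec A (e 4) * (-Ic))

/-! ### Auxiliary lemmas -/

lemma Qval (v : Fin 5 → ℝ) : Q v = v 1 ^ 2 + v 2 ^ 2 + v 3 ^ 2 - 2 * (v 0 * v 4) := by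
  simp [Q, Matrix.toQuadraticMap', Matrix.toQuadraticForm', LinearMap.BilinMap.toQuadraticMap,
    Matrix.toLinearMap₂'_apply, Fin.sum_univ_five, Bmat, QuadraticMap.instFunLike,
    Matrix.vecHead, Matrix.vecTail]
  ring

lemma polar_val (u v : Fin 5 → ℝ) :
    QuadraticMap.polar Q u v =
      2 * (u 1 * v 1 + u 2 * v 2 + u 3 * v 3) - 2 * (u 0 * v 4) - 2 * (u 4 * v 0) := by
  simp only [QuadraticMap.polar, Qval, Pi.add_apply]
  ring

lemma acomm_of_polar {i j : Fin 5} (h : QuadraticMap.polar Q (e i) (e j) = 0) :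
    ι Q (e i) * ι Q (e j) = -(ι Q (e j) * ι Q (e i)) := by
  have h2 := ι_mul_ι_add_swap (Q := Q) (e i) (e j)
  rw [h, map_zero] at h2
  exact eq_neg_of_add_eq_zero_left h2

lemma acomm01 : ι Q (e 0) * ι Q (e 1) = -(ι Q (e 1) * ι Q (e 0)) :=
  acomm_of_polar (by rw [polar_val]; simp +decide [e, Pi.single_apply])
lemma acomm02 : ι Q (e 0) * ι Q (e 2) = -(ι Q (e 2) * ι Q (e 0)) :=
  acomm_of_polar (by rw [polar_val]; simp +decide [e, Pi.single_apply])
lemma acomm03 : ι Q (e 0) * ι Q (e 3) = -(ι Q (e 3) * ι Q (e 0)) :=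
  acomm_of_polar (by rw [polar_val]; simp +decide [e, Pi.single_apply])
lemma acomm41 : ι Q (e 4) * ι Q (e 1) = -(ι Q (e 1) * ι Q (e 4)) :=
  acomm_of_polar (by rw [polar_val]; simp +decide [e, Pi.single_apply])
lemma acomm42 : ι Q (e 4) * ι Q (e 2) = -(ι Q (e 2) * ι Q (e 4)) :=
  acomm_of_polar (by rw [polar_val]; simp +decide [e, Pi.single_apply])
lemma acomm43 : ι Q (e 4) * ι Q (e 3) = -(ι Q (e 3) * ι Q (e 4)) :=
  acomm_of_polar (by rw [polar_val]; simp +decide [e, Pi.single_apply])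
lemma acomm12 : ι Q (e 1) * ι Q (e 2) = -(ι Q (e 2) * ι Q (e 1)) :=
  acomm_of_polar (by rw [polar_val]; simp +decide [e, Pi.single_apply])
lemma acomm13 : ι Q (e 1) * ι Q (e 3) = -(ι Q (e 3) * ι Q (e 1)) :=
  acomm_of_polar (by rw [polar_val]; simp +decide [e, Pi.single_apply])
lemma acomm23 : ι Q (e 2) * ι Q (e 3) = -(ι Q (e 3) * ι Q (e 2)) :=
  acomm_of_polar (by rw [polar_val]; simp +decide [e, Pi.single_apply])

lemma nsq : ι Q (e 0) * ι Q (e 0) = 0 := by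
  rw [ι_sq_scalar]
  rw [Qval]; simp +decide [e, Pi.single_apply]
lemma msq : ι Q (e 4) * ι Q (e 4) = 0 := by
  rw [ι_sq_scalar]
  rw [Qval]; simp +decide [e, Pi.single_apply]

lemma mn_rel : ι Q (e 4) * ι Q (e 0)
    = algebraMap ℝ (CliffordAlgebra Q) (-2) - ι Q (e 0) * ι Q (e 4) := by
  have h2 := ι_mul_ι_add_swap (Q := Q) (e 4) (e 0)
  have hp : QuadraticMap.polar Q (e 4) (e 0) = -2 := by
    rw [polar_val]; simp +decide [e, Pi.single_apply]
  rw [hp] at h2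
  exact eq_sub_of_add_eq h2

section helper
variable {A : Type*} [Ring A]

lemma swapL {x a : A} (h : x * a = -(a * x)) (y : A) : x * (a * y) = -(a * (x * y)) := by
  rw [← mul_assoc, h, neg_mul, mul_assoc]

lemma sqzL {x : A} (h : x * x = 0) (y : A) : x * (x * y) = 0 := by
  rw [← mul_assoc, h, zero_mul]

end helper

-- swap of n/m past IE
lemma n_IE : ι Q (e 0) * IE = -(IE * ι Q (e 0)) := by
  simp only [IE, mul_assoc, swapL acomm01, swapL acomm02, acomm03, mul_neg, neg_mul, neg_neg]

lemma m_IE : ι Q (e 4) * IE = -(IE * ι Q (e 4)) := by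
  simp only [IE, mul_assoc, swapL acomm41, swapL acomm42, acomm43, mul_neg, neg_mul, neg_neg]

-- elements of G₃ commute with n, m through involute, and are fixed by F
lemma G3_swap (v : Fin 5 → ℝ)
    (h1 : ι Q v * ι Q (e 1) = -(ι Q (e 1) * ι Q v))
    (h2 : ι Q v * ι Q (e 2) = -(ι Q (e 2) * ι Q v))
    (h3 : ι Q v * ι Q (e 3) = -(ι Q (e 3) * ι Q v))
    {X : CliffordAlgebra Q} (hX : X ∈ G₃) :
    ι Q v * involute X = X * ι Q v := by
  induction hX using Algebra.adjoin_induction with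
  | mem x hx =>
    rcases hx with rfl | rfl | rfl <;>
      simp only [involute_ι, mul_neg, h1, h2, h3, neg_neg]
  | algebraMap r => rw [AlgHom.commutes]; exact (Algebra.commutes r _).symm
  | add x y hx hy ihx ihy => rw [map_add, mul_add, add_mul, ihx, ihy]
  | mul x y hx hy ihx ihy =>
    rw [map_mul, ← mul_assoc, ihx, mul_assoc, ihy, mul_assoc]

lemma n_swap {X : CliffordAlgebra Q} (hX : X ∈ G₃) :
    ι Q (e 0) * involute X = X * ι Q (e 0) :=
  G3_swap _ acomm01 acomm02 acomm03 hX

lemma m_swap {X : CliffordAlgebra Q} (hX : X ∈ G₃) :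
    ι Q (e 4) * involute X = X * ι Q (e 4) :=
  G3_swap _ acomm41 acomm42 acomm43 hX

lemma sharp_fix (i : Fin 5) (h1 : i ≠ 0) (h4 : i ≠ 4) : sharpV (e i) = e i := by
  funext j
  simp only [sharpV, LinearMap.coe_mk, AddHom.coe_mk, e, Pi.single_apply]
  split_ifs with hj hj' <;> simp_all

lemma F_fix (F : CliffordAlgebra Q →ₐ[ℝ] CliffordAlgebra Q)
    (hF : ∀ v : Fin 5 → ℝ, F (ι Q v) = ι Q (sharpV v))
    {X : CliffordAlgebra Q} (hX : X ∈ G₃) : F X = X := by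
  induction hX using Algebra.adjoin_induction with
  | mem x hx =>
    rcases hx with rfl | rfl | rfl <;>
      rw [hF, sharp_fix] <;> decide
  | algebraMap r => exact F.commutes r
  | add x y hx hy ihx ihy => rw [map_add, ihx, ihy]
  | mul x y hx hy ihx ihy => rw [map_mul, ihx, ihy]

lemma sharp_e4 : sharpV (e 4) = -(e 0) := by
  funext j
  simp only [sharpV, LinearMap.coe_mk, AddHom.coe_mk, e, Pi.neg_apply, Pi.single_apply]
  split_ifs with hj hj' <;> simp_all

lemma F_m (F : CliffordAlgebra Q →ₐ[ℝ] CliffordAlgebra Q)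
    (hF : ∀ v : Fin 5 → ℝ, F (ι Q v) = ι Q (sharpV v)) :
    F (ι Q (e 4)) = -(ι Q (e 0)) := by
  rw [hF, sharp_e4, map_neg]

lemma F_IE (F : CliffordAlgebra Q →ₐ[ℝ] CliffordAlgebra Q)
    (hF : ∀ v : Fin 5 → ℝ, F (ι Q v) = ι Q (sharpV v)) : F IE = IE := by
  simp only [IE, map_mul, hF]
  rw [sharp_fix 1 (by decide) (by decide), sharp_fix 2 (by decide) (by decide),
    sharp_fix 3 (by decide) (by decide)]

lemma acomm_symm {A : Type*} [Ring A] {x y : A} (h : x * y = -(y * x)) :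
    y * x = -(x * y) := by rw [h, neg_neg]

lemma swapC {A : Type*} [Ring A] {x c ic : A} (h : x * ic = c * x) (y : A) :
    x * (ic * y) = c * (x * y) := by rw [← mul_assoc, h, mul_assoc]

lemma mnL (y : CliffordAlgebra Q) : ι Q (e 4) * (ι Q (e 0) * y)
    = (-2 : ℝ) • y - ι Q (e 0) * (ι Q (e 4) * y) := by
  rw [← mul_assoc, mn_rel, sub_mul, mul_assoc, Algebra.smul_def]

lemma Ic_eq : Ic = ι Q (e 0) * (IE * ι Q (e 4)) - IE := by
  simp only [Ic, wedgeVec, IE, map_mul, map_add, map_smul, involute_ι, mul_assoc, mul_neg, neg_mul, neg_neg,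
    smul_add, smul_neg, smul_smul, neg_mul_neg,
    swapL (acomm_symm acomm01), swapL (acomm_symm acomm02), swapL (acomm_symm acomm03),
    swapL acomm41, swapL acomm42, swapL acomm43,
    swapL (acomm_symm acomm12), swapL (acomm_symm acomm13), swapL (acomm_symm acomm23),
    acomm_symm acomm01, acomm_symm acomm02, acomm_symm acomm03,
    acomm41, acomm42, acomm43,
    acomm_symm acomm12, acomm_symm acomm13, acomm_symm acomm23,
    mnL, nsq, msq, sqzL nsq, sqzL msq,
    smul_sub, sub_mul, add_mul, mul_add, mul_sub, mul_smul_comm, smul_mul_assoc,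
      mul_zero, zero_mul, smul_zero, add_zero, zero_add, neg_zero, sub_zero, zero_sub]
  module

theorem dualP_euclidean_split (F : CliffordAlgebra Q →ₐ[ℝ] CliffordAlgebra Q)
    (hF : ∀ v : Fin 5 → ℝ, F (ι Q v) = ι Q (sharpV v)) :
    ∀ C ∈ G₃, ∀ D ∈ G₃,
      dualP F (C + D * ι Q (e 0)) = -(dualE D) + dualE C * ι Q (e 0) := by
  intro C hC D hD
  have key : wedgeVec (C + D * ι Q (e 0)) (e 4) * (-Ic)
      = C * (IE * ι Q (e 4)) + D * IE := by
    rw [Ic_eq]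
    simp only [wedgeVec, map_add, map_smul, map_mul, involute_ι, IE, mul_assoc, mul_neg, neg_mul,
      neg_neg, smul_add, smul_neg, smul_smul, neg_mul_neg,
      m_swap hC, m_swap hD, n_swap hC, n_swap hD,
      swapC (m_swap hC), swapC (m_swap hD), swapC (n_swap hC), swapC (n_swap hD),
      swapL (acomm_symm acomm01), swapL (acomm_symm acomm02), swapL (acomm_symm acomm03),
      swapL acomm41, swapL acomm42, swapL acomm43,
      swapL (acomm_symm acomm12), swapL (acomm_symm acomm13), swapL (acomm_symm acomm23),
      acomm_symm acomm01, acomm_symm acomm02, acomm_symm acomm03,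
      acomm41, acomm42, acomm43,
      acomm_symm acomm12, acomm_symm acomm13, acomm_symm acomm23,
      mnL, nsq, msq, sqzL nsq, sqzL msq,
      smul_sub, sub_mul, add_mul, mul_add, mul_sub, mul_smul_comm, smul_mul_assoc,
      mul_zero, zero_mul, smul_zero, add_zero, zero_add, neg_zero, sub_zero, zero_sub]
    module
  rw [dualP, key]
  simp only [map_add, map_mul, F_fix F hF hC, F_fix F hF hD, F_IE F hF, F_m F hF, dualE]
  noncomm_ring
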